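/- Let {G_i} be a collection of groups with a common subgroup A, and let H_i ⊆ G_i be subgroups such that the intersection H_i ∩ A equals a fixed subgroup B independent of i. Then the natural homomorphism from the amalgamated free product of the H_i over B to the amalgamated free product of the G_i over A is injective. -/

import Mathlib

open Monoid Monoid.PushoutI Monoid.PushoutI.NormalWord Function

/-- Serre. Let `{G i}` be a collection of groups with a common subgroup `A`
(given by injections `incA i : A →* G i`), and let `H i ⊆ G i` be subgroups (given by
injections `f i : H i →* G i`) such that the intersection `H i ∩ A` equals a fixed subgroup
`B` (given by `j : B →* A` and `incB i : B →* H i`, with commuting squares), independently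
of `i`.  Then the natural homomorphism `∗_B H i →* ∗_A G i` of amalgamated free products
is injective. -/
theorem stmt_1 {ι : Type} {A B : Type} [Group A] [Group B]
    (G : ι → Type) [∀ i, Group (G i)]
    (H : ι → Type) [∀ i, Group (H i)]
    (incA : ∀ i, A →* G i) (hincA : ∀ i, Function.Injective (incA i))
    (incB : ∀ i, B →* H i) (hincB : ∀ i, Function.Injective (incB i))
    (j : B →* A) (hj : Function.Injective j)
    (f : ∀ i, H i →* G i) (hf : ∀ i, Function.Injective (f i))
    -- the square `B → H i → G i` equals `B → A → G i`
    (hsquare : ∀ i, (f i).comp (incB i) = (incA i).comp j)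
    -- `H i ∩ A = B` inside `G i`
    (hinter : ∀ i, (f i).range ⊓ (incA i).range = ((incA i).comp j).range)
    -- `Φ` is the natural homomorphism `∗_B H i →* ∗_A G i`
    (Φ : Monoid.PushoutI incB →* Monoid.PushoutI incA)
    (hΦof : ∀ (i : ι) (h : H i),
      Φ (Monoid.PushoutI.of (φ := incB) i h) = Monoid.PushoutI.of (φ := incA) i (f i h))
    (hΦbase : ∀ b : B,
      Φ (Monoid.PushoutI.base incB b) = Monoid.PushoutI.base incA (j b)) :
    Function.Injective Φ := by
  classical
  -- key: if `h ∉ range (incB i)` then `f i h ∉ range (incA i)`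
  have key : ∀ (i : ι) (h : H i), h ∉ (incB i).range → f i h ∉ (incA i).range := by
    intro i h hh hmem
    apply hh
    have : f i h ∈ (f i).range ⊓ (incA i).range := ⟨⟨h, rfl⟩, hmem⟩
    rw [hinter i] at this
    obtain ⟨b, hb⟩ := this
    refine ⟨b, hf i ?_⟩
    rw [← hb, ← MonoidHom.comp_apply, hsquare i]
  obtain ⟨d⟩ := transversal_nonempty incB hincB
  rw [injective_iff_map_eq_one]
  intro x hx
  -- normal form of `x`
  set w : NormalWord d := NormalWord.equiv x with hw
  have hxw : x = w.prod := (NormalWord.equiv.symm_apply_apply x).symm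
  -- letters of `w` are not in the range of `incB`
  have hred : ∀ i (g : G i) (hg : Sigma.mk i g ∈ w.toList.map
      (fun l : Σ i, H i => (⟨l.1, f l.1 l.2⟩ : Σ i, G i))), g ∉ (incA i).range := by
    rintro i g hg
    simp only [List.mem_map] at hg
    obtain ⟨⟨i', h⟩, hmem, heq⟩ := hg
    obtain ⟨rfl, h2⟩ := Sigma.mk.inj_iff.1 heq
    rw [← eq_of_heq h2]
    apply key
    -- `h` is a nonidentity element of the transversal, hence not in range incB
    intro ⟨b, hb⟩
    have h1 : h ≠ 1 := w.ne_one _ hmem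
    have hset : h ∈ d.set i' := w.normalized _ _ hmem
    have hcompl := (d.compl i').1
    have := hcompl (a₁ := (⟨⟨h, ⟨b, hb⟩⟩, ⟨1, d.one_mem i'⟩⟩ :
        ((incB i').range : Set (H i')) × (d.set i')))
      (a₂ := ⟨⟨1, Subgroup.one_mem _⟩, ⟨h, hset⟩⟩) (by simp)
    exact h1 (by simpa using (congrArg (fun p => (p.2 : H i')) this).symm)
  -- the mapped word in `G`
  let W : Monoid.CoprodI.Word G :=
    { toList := w.toList.map (fun l : Σ i, H i => ⟨l.1, f l.1 l.2⟩)
      ne_one := by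
        rintro l hl
        simp only [List.mem_map] at hl
        obtain ⟨⟨i', h⟩, hmem, rfl⟩ := hl
        have h1 : h ≠ 1 := w.ne_one _ hmem
        simpa using fun e => h1 (hf i' (by simpa using e))
      chain_ne := by
        rw [List.isChain_map]
        exact w.chain_ne }
  have hWred : Reduced incA W := by
    rintro ⟨i, g⟩ hg
    exact hred i g hg
  -- compute `Φ x`
  have hΦx : Φ x = base incA (j w.head) * ofCoprodI W.prod := by
    rw [hxw, NormalWord.prod, map_mul, hΦbase]
    congr 1
    show Φ (ofCoprodI (Monoid.CoprodI.Word.prod w.toWord)) = _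
    simp only [W, Monoid.CoprodI.Word.prod, map_list_prod, List.map_map]
    congr 1
    apply List.map_congr_left
    rintro ⟨i, g⟩ _
    simp [ofCoprodI_of, hΦof]
  -- conclude the word is empty
  rw [hΦx] at hx
  have hmem : ofCoprodI W.prod ∈ (base incA).range := by
    refine ⟨(j w.head)⁻¹, ?_⟩
    rw [map_inv]
    exact inv_eq_of_mul_eq_one_right hx
  have hempty := hWred.eq_empty_of_mem_range hincA hmem
  have hnil : w.toList = [] := by
    have := congrArg (fun W : Monoid.CoprodI.Word G => W.toList.length) hempty
    simpa [W, Monoid.CoprodI.Word.empty] using this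
  -- so `x = base incB w.head`
  have hxbase : x = base incB w.head := by
    rw [hxw, NormalWord.prod]
    have : w.toWord.prod = 1 := by
      rw [Monoid.CoprodI.Word.prod, hnil]; simp
    rw [this]; simp
  -- and `w.head = 1`
  have : base incA (j w.head) = 1 := by
    rw [hempty] at hx; simpa using hx
  have : j w.head = 1 := base_injective hincA (by simpa using this)
  have : w.head = 1 := hj (by simpa using this)
  rw [hxbase, this, map_one]
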